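/- Let φ : X → H be weakly measurable and suppose there exists an injective positive self-adjoint operator G on H with bounded inverse G⁻¹ such that φ_x ∈ D(G) for a.e. x and Gφ is a continuous frame for H. Then φ is μ-total. -/
import Mathlib


open MeasureTheory
open scoped ENNReal NNReal

local notation "⟪" x ", " y "⟫" => @inner ℂ _ _ x y

/-- A densely defined operator `T` is self-adjoint: symmetric, and every weak-adjoint pair
belongs to its graph. -/
def IsSelfAdjointPMap {H : Type*} [NormedAddCommGroup H] [InnerProductSpace ℂ H]
    (T : H →ₗ.[ℂ] H) : Prop :=
  Dense (T.domain : Set H) ∧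
  (∀ f g : T.domain, ⟪T f, (g : H)⟫ = ⟪(f : H), T g⟫) ∧
  (∀ g h : H, (∀ f : T.domain, ⟪T f, g⟫ = ⟪(f : H), h⟫) →
    ∃ hg : g ∈ T.domain, T ⟨g, hg⟩ = h)

/-- if there is an injective positive self-adjoint `G` with bounded (two-sided)
inverse `G⁻¹` such that `φ_x ∈ D(G)` and `Gφ` is a continuous frame for `H`, then `φ` is
`μ`-total. -/
theorem stmt6 {H X : Type*}
    [NormedAddCommGroup H] [InnerProductSpace ℂ H] [CompleteSpace H]
    [MeasurableSpace X] (μ : Measure X) (φ : X → H)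
    (hwm : ∀ f : H, AEStronglyMeasurable (fun x => ⟪f, φ x⟫) μ)
    (G : H →ₗ.[ℂ] H) (hmem : ∀ x, φ x ∈ G.domain)
    (hsa : IsSelfAdjointPMap G)
    (hpos : ∀ f : G.domain, 0 ≤ (⟪G f, (f : H)⟫).re)
    (hinj : ∀ f : G.domain, G f = 0 → (f : H) = 0)
    (Ginv : H →L[ℂ] H)
    (hGmem : ∀ g : H, Ginv g ∈ G.domain)
    (hright : ∀ g : H, G ⟨Ginv g, hGmem g⟩ = g)
    (hleft : ∀ f : G.domain, Ginv (G f) = (f : H))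
    (m' M' : ℝ) (hm' : 0 < m')
    (hframe : ∀ f : H,
      ENNReal.ofReal (m' * ‖f‖ ^ 2) ≤
          ∫⁻ x, (‖⟪f, G ⟨φ x, hmem x⟩⟫‖₊ : ℝ≥0∞) ^ 2 ∂μ ∧
      ∫⁻ x, (‖⟪f, G ⟨φ x, hmem x⟩⟫‖₊ : ℝ≥0∞) ^ 2 ∂μ ≤ ENNReal.ofReal (M' * ‖f‖ ^ 2)) :
    ∀ f : H, (∀ᵐ x ∂μ, ⟪f, φ x⟫ = 0) → f = 0 := by
  intro f hf
  have key : ∀ᵐ x ∂μ, ⟪Ginv f, G ⟨φ x, hmem x⟩⟫ = 0 := by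
    filter_upwards [hf] with x hx
    have h1 := hsa.2.1 ⟨Ginv f, hGmem f⟩ ⟨φ x, hmem x⟩
    rw [hright f] at h1
    rw [← h1]
    exact hx
  have hint : ∫⁻ x, (‖⟪Ginv f, G ⟨φ x, hmem x⟩⟫‖₊ : ℝ≥0∞) ^ 2 ∂μ = 0 := by
    rw [← lintegral_zero (μ := μ)]
    apply lintegral_congr_ae
    filter_upwards [key] with x hx
    simp [hx]
  have hlow := (hframe (Ginv f)).1
  rw [hint] at hlow
  have h0 : m' * ‖Ginv f‖ ^ 2 ≤ 0 := by
    by_contra h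
    push_neg at h
    exact (ENNReal.ofReal_pos.mpr h).not_ge hlow
  have hg0 : Ginv f = 0 := by
    have := mul_nonneg hm'.le (sq_nonneg ‖Ginv f‖)
    have : m' * ‖Ginv f‖ ^ 2 = 0 := le_antisymm h0 this
    have : ‖Ginv f‖ ^ 2 = 0 := by
      rcases mul_eq_zero.mp this with h | h
      · exact absurd h hm'.ne'
      · exact h
    simpa using pow_eq_zero_iff (n := 2) (by norm_num) |>.mp this
  have : (⟨Ginv f, hGmem f⟩ : G.domain) = 0 := Subtype.ext (by simpa using hg0)
  have hz := hright f
  rw [this, G.map_zero] at hz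
  exact hz.symm
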